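/- Let G be a topological group with a left-invariant metric, acting continuously on a compact metric space K. Suppose p_i → p in K and h_i ∈ G satisfy h_i · p_i = p_i, h_i ≠ e, and d(e, h_i) → 0. Write h_i = exp(t_i v_i) with unit vectors v_i in the Lie algebra and t_i → 0, and suppose v_i → v. Then for every t ∈ ℝ, exp(t v) · p = p; in particular the stabilizer of p contains a one-parameter subgroup. -/

import Mathlib

open Filter Topology

/-- Limit one-parameter subgroup in a stabilizer.  Let `G` be a topological group
acting continuously on a compact metric space `K`, and let `exp : E → G` be a
continuous exponential map from a normed space (the Lie algebra) satisfying the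
one-parameter property `exp((k : ℝ) • x) = (exp x) ^ k` for integers `k`.  If
`pᵢ → p`, `hᵢ = exp(tᵢ • vᵢ)` fixes `pᵢ`, `hᵢ ≠ e`, `tᵢ → 0`, `‖vᵢ‖ = 1` and
`vᵢ → v`, then `exp(t • v)` fixes `p` for every `t ∈ ℝ`; in particular the
stabilizer of `p` contains a one-parameter subgroup. -/
theorem limit_one_parameter_subgroup_in_stabilizer
    (E : Type*) [NormedAddCommGroup E] [NormedSpace ℝ E]
    (G : Type*) [Group G] [TopologicalSpace G] [IsTopologicalGroup G]
    (K : Type*) [MetricSpace K] [CompactSpace K]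
    [MulAction G K] [ContinuousSMul G K]
    (exp : E → G) (hexp_cont : Continuous exp)
    (hexp : ∀ (x : E) (k : ℤ), exp ((k : ℝ) • x) = (exp x) ^ k)
    (p : ℕ → K) (plim : K) (hp : Tendsto p atTop (𝓝 plim))
    (t : ℕ → ℝ) (ht : Tendsto t atTop (𝓝 0))
    (v : ℕ → E) (hv : ∀ i, ‖v i‖ = 1) (vlim : E) (hvlim : Tendsto v atTop (𝓝 vlim))
    (hfix : ∀ i, exp (t i • v i) • p i = p i)
    (hne : ∀ i, exp (t i • v i) ≠ 1) :
    ∀ s : ℝ, exp (s • vlim) • plim = plim := by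
  intro s
  -- t i ≠ 0
  have ht0 : ∀ i, t i ≠ 0 := by
    intro i h
    apply hne i
    rw [h, zero_smul]
    have := hexp (v i) 0
    simpa using this
  -- integers k i
  set k : ℕ → ℤ := fun i => ⌊s / t i⌋ with hk
  -- |k i * t i - s| ≤ |t i|
  have hbd : ∀ i, |(k i : ℝ) * t i - s| ≤ |t i| := by
    intro i
    have h1 : |(k i : ℝ) - s / t i| ≤ 1 := by
      have hx1 : (k i : ℝ) ≤ s / t i := Int.floor_le _
      have hx2 : s / t i < (k i : ℝ) + 1 := Int.lt_floor_add_one _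
      rw [abs_sub_comm, abs_of_nonneg (by linarith)]
      linarith
    calc |(k i : ℝ) * t i - s| = |((k i : ℝ) - s / t i) * t i| := by
          rw [sub_mul, div_mul_cancel₀ _ (ht0 i)]
      _ = |(k i : ℝ) - s / t i| * |t i| := abs_mul _ _
      _ ≤ 1 * |t i| := mul_le_mul_of_nonneg_right h1 (abs_nonneg _)
      _ = |t i| := one_mul _
  -- k i * t i → s
  have hks : Tendsto (fun i => (k i : ℝ) * t i) atTop (𝓝 s) := by
    rw [tendsto_iff_dist_tendsto_zero]
    apply squeeze_zero (fun i => dist_nonneg) (fun i => (hbd i).trans le_rfl)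
    simpa using ht.abs
  -- arguments converge
  have harg : Tendsto (fun i => ((k i : ℝ) * t i) • v i) atTop (𝓝 (s • vlim)) :=
    hks.smul hvlim
  -- each exp(k i * t i • v i) fixes p i
  have hfix' : ∀ i, exp (((k i : ℝ) * t i) • v i) • p i = p i := by
    intro i
    have hmem : exp (t i • v i) ∈ MulAction.stabilizer G (p i) := hfix i
    have : exp (((k i : ℝ) * t i) • v i) = (exp (t i • v i)) ^ (k i) := by
      rw [← hexp, mul_smul]
    rw [this]
    exact zpow_mem hmem (k i)
  have hL : Tendsto (fun i => exp (((k i : ℝ) * t i) • v i) • p i) atTop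
      (𝓝 (exp (s • vlim) • plim)) :=
    ((hexp_cont.tendsto _).comp harg).smul hp
  have hR : Tendsto (fun i => exp (((k i : ℝ) * t i) • v i) • p i) atTop (𝓝 plim) := by
    simpa only [hfix'] using hp
  exact tendsto_nhds_unique hL hR
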